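/- (Sylvester-type identity for complementary minors.) Let K be a k×k complex matrix with k ≥ 4. For 1 ≤ a < b ≤ k let E_{ab} denote the determinant of the (k−2)×(k−2) matrix obtained from K by deleting rows 1 and 2 and columns a and b. Then for all r, s with 3 ≤ r < s ≤ k: E_{1r}·E_{2s} − E_{1s}·E_{2r} = E_{12}·E_{rs}. -/

import Mathlib

open Complex BigOperators Matrix

/-- The strictly increasing enumeration `Fin (k-2) → Fin k` of the complement of
`{i, j}` (junk value if `i = j`). -/
noncomputable def delTwo {k : ℕ} (i j : Fin k) : Fin (k - 2) → Fin k :=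
  if h : ({i, j}ᶜ : Finset (Fin k)).card = k - 2 then
    fun r => (({i, j}ᶜ : Finset (Fin k)).orderIsoOfFin h r : Fin k)
  else fun r => ⟨r.val, lt_of_lt_of_le r.isLt (Nat.sub_le k 2)⟩

section SylvesterAux

open Finset Equiv

/-- Cramer-based exchange lemma. -/
private lemma sylv_exchange {n : ℕ} (A : Matrix (Fin n) (Fin n) ℂ)
    (φ : ((Fin n → ℂ) →ₗ[ℂ] ℂ)) (u : Fin n → ℂ) :
    A.det * φ u = ∑ i, (A.updateCol i u).det * φ (fun j => A j i) := by
  have h2 : φ (A *ᵥ Matrix.cramer A u) = A.det * φ u := by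
    rw [Matrix.mulVec_cramer, _root_.map_smul, smul_eq_mul]
  rw [← h2]
  have h3 : A *ᵥ Matrix.cramer A u = ∑ i, Matrix.cramer A u i • (fun j => A j i) := by
    funext j
    simp [Matrix.mulVec, dotProduct, Finset.sum_apply, mul_comm]
  rw [h3, map_sum]
  refine Finset.sum_congr rfl fun i _ => ?_
  rw [_root_.map_smul, Matrix.cramer_apply, smul_eq_mul]

/-- two elements consed in front of a tuple -/
private def cc {α : Type*} {m : ℕ} (x y : α) (w : Fin m → α) : Fin (m+2) → α :=
  Fin.cons x (Fin.cons y w)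

variable {α : Type*} {m : ℕ}

private lemma cc_zero (x y : α) (w : Fin m → α) : cc x y w (0 : Fin (m+2)) = x := rfl

private lemma cc_one (x y : α) (w : Fin m → α) : cc x y w (1 : Fin (m+2)) = y := by
  rw [cc, ← Fin.succ_zero_eq_one, Fin.cons_succ]
  rfl

private lemma cc_ss (x y : α) (w : Fin m → α) (v : ℕ) (h : v + 2 < m + 2) :
    cc x y w (⟨v+2, h⟩ : Fin (m+2)) = w ⟨v, by omega⟩ := by
  have h1 : (⟨v+2, h⟩ : Fin (m+2)) = Fin.succ ⟨v+1, by omega⟩ := rfl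
  have h2 : (⟨v+1, by omega⟩ : Fin (m+1)) = Fin.succ ⟨v, by omega⟩ := rfl
  rw [cc, h1, Fin.cons_succ, h2, Fin.cons_succ]

private lemma cc_succ_succ (x y : α) (w : Fin m → α) (i : Fin m) :
    cc x y w i.succ.succ = w i := by
  have : i.succ.succ = (⟨i.1 + 2, by omega⟩ : Fin (m+2)) := by simp [Fin.ext_iff]
  rw [this, cc_ss]

private lemma fin_one_eq (h : 1 < m + 2) : (⟨1, h⟩ : Fin (m+2)) = 1 := by
  simp [Fin.ext_iff]

private lemma cc_ne_one (x y z : α) (w : Fin m → α) (j : Fin (m+2)) (h : j ≠ 1) :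
    cc x y w j = cc x z w j := by
  rcases j with ⟨jv, hjv⟩
  match jv, hjv with
  | 0, h' => rfl
  | 1, h' => exact absurd (fin_one_eq h') h
  | (v+2), h' => rw [cc_ss, cc_ss]

private lemma cc_ne_zero (x y z : α) (w : Fin m → α) (j : Fin (m+2)) (h : j ≠ 0) :
    cc x y w j = cc z y w j := by
  rcases j with ⟨jv, hjv⟩
  match jv, hjv with
  | 0, h' => exact absurd rfl h
  | 1, h' => rw [fin_one_eq, cc_one, cc_one]
  | (v+2), h' => rw [cc_ss, cc_ss]

private lemma swap_cc (x y : α) (w : Fin m → α) (j : Fin (m+2)) :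
    cc x y w (Equiv.swap 0 1 j) = cc y x w j := by
  rcases j with ⟨jv, hjv⟩
  match jv, hjv with
  | 0, h' =>
    show cc x y w (Equiv.swap 0 1 0) = _
    rw [Equiv.swap_apply_left, cc_one]; rfl
  | 1, h' =>
    rw [fin_one_eq, Equiv.swap_apply_right, cc_zero, cc_one]
  | (v+2), h' =>
    rw [Equiv.swap_apply_of_ne_of_ne (by simp [Fin.ext_iff]) (by simp [Fin.ext_iff]), cc_ss, cc_ss]

private lemma br_antisymm {k : ℕ} (N : Matrix (Fin (m+2)) (Fin k) ℂ) (w : Fin m → Fin k)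
    (x y : Fin k) :
    (N.submatrix id (cc x y w)).det = - (N.submatrix id (cc y x w)).det := by
  have h : N.submatrix id (cc y x w)
      = (N.submatrix id (cc x y w)).submatrix id (Equiv.swap 0 1) := by
    ext i j
    simp only [Matrix.submatrix_apply, id_eq]
    rw [swap_cc]
  rw [h, Matrix.det_permute', Equiv.Perm.sign_swap (by simp [Fin.ext_iff])]
  simp

/-- The three-term Grassmann–Plücker relation. -/
private lemma sylv_gp {k : ℕ} (N : Matrix (Fin (m+2)) (Fin k) ℂ) (w : Fin m → Fin k)
    (a b c d : Fin k) :
    (N.submatrix id (cc a b w)).det * (N.submatrix id (cc c d w)).det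
    = (N.submatrix id (cc a c w)).det * (N.submatrix id (cc b d w)).det
    - (N.submatrix id (cc a d w)).det * (N.submatrix id (cc b c w)).det := by
  have hφadd : ∀ (u v : Fin (m+2) → ℂ),
      ((N.submatrix id (cc b b w)).updateCol 1 (u + v)).det
      = ((N.submatrix id (cc b b w)).updateCol 1 u).det
        + ((N.submatrix id (cc b b w)).updateCol 1 v).det := fun u v =>
    Matrix.det_updateCol_add _ 1 u v
  let φ : ((Fin (m+2) → ℂ) →ₗ[ℂ] ℂ) :=
    { toFun := fun x => ((N.submatrix id (cc b b w)).updateCol 1 x).det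
      map_add' := hφadd
      map_smul' := fun r x => by simp [Matrix.det_updateCol_smul] }
  have hφ : ∀ x : Fin k, φ (fun i => N i x) = (N.submatrix id (cc b x w)).det := by
    intro x
    have hBx : (N.submatrix id (cc b b w)).updateCol 1 (fun i => N i x)
        = N.submatrix id (cc b x w) := by
      ext i j
      rw [Matrix.updateCol_apply]
      by_cases hj : j = 1
      · subst hj; simp [cc_one]
      · simp only [if_neg hj, Matrix.submatrix_apply, id_eq]
        rw [cc_ne_one b b x w j hj]
    simp only [φ, LinearMap.coe_mk, AddHom.coe_mk, hBx]
  have key := sylv_exchange (N.submatrix id (cc c d w)) φ (fun i => N i a)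
  have hupd0 : (N.submatrix id (cc c d w)).updateCol 0 (fun i => N i a)
      = N.submatrix id (cc a d w) := by
    ext i j
    rw [Matrix.updateCol_apply]
    by_cases hj : j = 0
    · subst hj; simp [cc_zero]
    · simp only [if_neg hj, Matrix.submatrix_apply, id_eq]
      rw [cc_ne_zero c d a w j hj]
  have hupd1 : (N.submatrix id (cc c d w)).updateCol 1 (fun i => N i a)
      = N.submatrix id (cc c a w) := by
    ext i j
    rw [Matrix.updateCol_apply]
    by_cases hj : j = 1
    · subst hj; simp [cc_one]
    · simp only [if_neg hj, Matrix.submatrix_apply, id_eq]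
      rw [cc_ne_one c d a w j hj]
  rw [Fin.sum_univ_succ, Fin.sum_univ_succ] at key
  have hzero : ∀ i : Fin m, φ (fun j => (N.submatrix id (cc c d w)) j i.succ.succ) = 0 := by
    intro i
    have hcol : (fun j => (N.submatrix id (cc c d w)) j i.succ.succ) = fun j => N j (w i) := by
      funext j
      simp [Matrix.submatrix_apply, cc_succ_succ]
    rw [hcol, hφ]
    refine Matrix.det_zero_of_column_eq (i := (1 : Fin (m+2))) (j := i.succ.succ) ?_ fun l => ?_
    · simp [Fin.ext_iff]
    · simp only [Matrix.submatrix_apply, id_eq]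
      rw [cc_one, cc_succ_succ]
  have hsum0 : (∑ i : Fin m,
      ((N.submatrix id (cc c d w)).updateCol i.succ.succ fun i => N i a).det
      * φ (fun j => (N.submatrix id (cc c d w)) j i.succ.succ)) = 0 := by
    refine Finset.sum_eq_zero fun i _ => ?_
    rw [hzero i, mul_zero]
  have hc0 : (fun j => (N.submatrix id (cc c d w)) j 0) = fun j => N j c := by
    funext j; simp [cc_zero]
  rw [Fin.succ_zero_eq_one] at key
  have hc1 : (fun j => (N.submatrix id (cc c d w)) j 1) = fun j => N j d := by
    funext j
    simp only [Matrix.submatrix_apply, id_eq]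
    rw [cc_one]
  rw [hsum0, add_zero, hc0, hc1, hφ, hφ, hφ, hupd0, hupd1] at key
  linear_combination (-1 : ℂ) * key
    + (N.submatrix id (cc c d w)).det * br_antisymm N w b a
    - (N.submatrix id (cc b d w)).det * br_antisymm N w c a

/-- Position/counting fact for sorted enumerations. -/
private lemma enum_lt_iff {k : ℕ} (S : Finset (Fin k)) (hS : S.card = m) (x : Fin k) (j : Fin m) :
    S.orderEmbOfFin hS j < x ↔ (j : ℕ) < (S.filter (· < x)).card := by
  classical
  set D : Finset (Fin m) := univ.filter (fun j => S.orderEmbOfFin hS j < x) with hD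
  have hcard : D.card = (S.filter (· < x)).card := by
    refine Finset.card_bij (fun j _ => S.orderEmbOfFin hS j) ?_ ?_ ?_
    · intro a ha
      simp only [hD, mem_filter, mem_univ, true_and] at ha
      exact mem_filter.2 ⟨Finset.orderEmbOfFin_mem S hS a, ha⟩
    · intro a _ b _ hab
      exact (S.orderEmbOfFin hS).injective hab
    · intro y hy
      rw [mem_filter] at hy
      obtain ⟨j, hj⟩ : ∃ j, S.orderEmbOfFin hS j = y := by
        have h1 := Finset.range_orderEmbOfFin S hS
        have h2 : y ∈ Set.range (S.orderEmbOfFin hS) := by rw [h1]; exact_mod_cast hy.1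
        exact h2
      exact ⟨j, by simp [hD, hj, hy.2], hj⟩
  have hdc : ∀ j ∈ D, ∀ j' : Fin m, j' ≤ j → j' ∈ D := by
    intro j hj j' hle
    simp only [hD, mem_filter, mem_univ, true_and] at hj ⊢
    exact lt_of_le_of_lt ((S.orderEmbOfFin hS).monotone hle) hj
  have hiff : ∀ j : Fin m, j ∈ D ↔ (j : ℕ) < D.card := by
    intro j
    constructor
    · intro hj
      have hsub : Finset.Iic j ⊆ D := fun j' hj' => hdc j hj j' (Finset.mem_Iic.1 hj')
      have := Finset.card_le_card hsub
      rw [Fin.card_Iic] at this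
      omega
    · intro hj
      by_contra hnj
      have hsub : D ⊆ Finset.Iio j := by
        intro j'' hj''
        rw [Finset.mem_Iio]
        by_contra hge
        exact hnj (hdc j'' hj'' j (not_lt.1 hge))
      have := Finset.card_le_card hsub
      rw [Fin.card_Iio] at this
      omega
  have := hiff j
  rw [hcard] at this
  simpa [hD] using this

/-- Sorted enumeration of `insert x S` versus consing `x` in front. -/
private lemma enum_insert {k : ℕ} (S : Finset (Fin k)) (hS : S.card = m) (x : Fin k) (hx : x ∉ S)
    (h' : (insert x S).card = m + 1) :
    ∃ p : Fin (m+1), ((p : ℕ) = (S.filter (· < x)).card ∧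
      ⇑((insert x S).orderEmbOfFin h') =
        (Fin.cons x (fun j => S.orderEmbOfFin hS j)) ∘ Fin.cycleRange p) := by
  classical
  have hple : (S.filter (· < x)).card ≤ m := by
    rw [← hS]; exact Finset.card_le_card (Finset.filter_subset _ _)
  set p : Fin (m+1) := ⟨(S.filter (· < x)).card, by omega⟩ with hp
  refine ⟨p, rfl, ?_⟩
  set f : Fin (m+1) → Fin k := (Fin.cons x (fun j => S.orderEmbOfFin hS j)) ∘ Fin.cycleRange p
    with hf
  have hvlt : ∀ j : Fin (m+1), (hlt : (j : ℕ) < (p : ℕ)) →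
      f j = S.orderEmbOfFin hS ⟨j, by omega⟩ := by
    intro j hlt
    have h1 : Fin.cycleRange p j = j + 1 := Fin.cycleRange_of_lt (by rwa [Fin.lt_def])
    have h2 : j + 1 = Fin.succ ⟨(j : ℕ), by omega⟩ := by
      rw [Fin.ext_iff, Fin.val_add_one_of_lt]
      · rfl
      · rw [Fin.lt_def]; simp only [Fin.val_last]; omega
    rw [hf]
    simp only [Function.comp_apply, h1, h2, Fin.cons_succ]
  have hveq : f p = x := by
    rw [hf]
    simp only [Function.comp_apply, Fin.cycleRange_self, Fin.cons_zero]
  have hvgt : ∀ j : Fin (m+1), (hgt : (p : ℕ) < (j : ℕ)) →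
      f j = S.orderEmbOfFin hS ⟨(j : ℕ) - 1, by omega⟩ := by
    intro j hgt
    have h1 : Fin.cycleRange p j = j := Fin.cycleRange_of_gt (by rwa [Fin.lt_def])
    have h2 : j = Fin.succ ⟨(j : ℕ) - 1, by omega⟩ := by
      rw [Fin.ext_iff]; simp only [Fin.val_succ]; omega
    rw [hf]
    simp only [Function.comp_apply, h1]
    conv_lhs => rw [h2]
    rw [Fin.cons_succ]
  have hmem : ∀ j, f j ∈ insert x S := by
    intro j
    rcases lt_trichotomy ((j : ℕ)) ((p : ℕ)) with h | h | h
    · rw [hvlt j h]; exact Finset.mem_insert_of_mem (Finset.orderEmbOfFin_mem _ _ _)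
    · have hj : j = p := Fin.ext h
      rw [hj, hveq]; exact Finset.mem_insert_self _ _
    · rw [hvgt j h]; exact Finset.mem_insert_of_mem (Finset.orderEmbOfFin_mem _ _ _)
  have hmono : StrictMono f := by
    intro j1 j2 hlt12
    have hv12 : (j1 : ℕ) < (j2 : ℕ) := hlt12
    rcases lt_trichotomy ((j1 : ℕ)) ((p : ℕ)) with h1 | h1 | h1
    · rcases lt_trichotomy ((j2 : ℕ)) ((p : ℕ)) with h2 | h2 | h2
      · rw [hvlt j1 h1, hvlt j2 h2]
        exact (S.orderEmbOfFin hS).strictMono (by rw [Fin.lt_def]; exact hv12)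
      · rw [hvlt j1 h1, Fin.ext h2, hveq]
        exact (enum_lt_iff S hS x _).2 (by exact h1)
      · rw [hvlt j1 h1, hvgt j2 h2]
        exact (S.orderEmbOfFin hS).strictMono (by rw [Fin.lt_def]; simp; omega)
    · rcases lt_trichotomy ((j2 : ℕ)) ((p : ℕ)) with h2 | h2 | h2
      · omega
      · omega
      · rw [Fin.ext h1, hveq, hvgt j2 h2]
        have hne : S.orderEmbOfFin hS ⟨(j2 : ℕ) - 1, by omega⟩ ≠ x := by
          intro hcontra
          exact hx (hcontra ▸ Finset.orderEmbOfFin_mem S hS _)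
        have hnlt : ¬ (S.orderEmbOfFin hS ⟨(j2 : ℕ) - 1, by omega⟩ < x) := by
          rw [enum_lt_iff S hS x]
          simp only [not_lt]
          simp only [hp] at h2 ⊢
          omega
        rcases lt_trichotomy (S.orderEmbOfFin hS ⟨(j2 : ℕ) - 1, by omega⟩) x with h | h | h
        · exact absurd h hnlt
        · exact absurd h hne
        · exact h
    · rcases lt_trichotomy ((j2 : ℕ)) ((p : ℕ)) with h2 | h2 | h2
      · omega
      · omega
      · rw [hvgt j1 h1, hvgt j2 h2]
        exact (S.orderEmbOfFin hS).strictMono (by rw [Fin.lt_def]; simp; omega)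
  exact (Finset.orderEmbOfFin_unique h' hmem hmono).symm

private lemma cons_comp_perm (x : α) (g : Fin (m+1) → α) (σ : Equiv.Perm (Fin (m+1))) :
    (Fin.cons x (g ∘ σ) : Fin (m+2) → α)
      = (Fin.cons x g : Fin (m+2) → α) ∘ (Equiv.Perm.decomposeFin.symm (0, σ)) := by
  funext j
  refine Fin.cases ?_ (fun i => ?_) j
  · simp
  · simp [Equiv.Perm.decomposeFin_symm_apply_succ]

private lemma det_compl_pair {k : ℕ} (N : Matrix (Fin (m+2)) (Fin k) ℂ)
    (T : Finset (Fin k)) (hT : T.card = m) (c d : Fin k) (hc : c ∉ insert d T) (hd : d ∉ T)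
    (h2 : (insert c (insert d T)).card = m + 2)
    (g : Fin (m+2) → Fin k) (hg : ∀ j, g j ∈ insert c (insert d T)) (hgm : StrictMono g) :
    (N.submatrix id g).det =
      (-1 : ℂ) ^ ((((insert d T).filter (· < c)).card) + ((T.filter (· < d)).card)) *
      (N.submatrix id (cc c d (fun j => T.orderEmbOfFin hT j))).det := by
  classical
  have h1 : (insert d T).card = m + 1 := by rw [Finset.card_insert_of_notMem hd, hT]
  have hgenum : g = ⇑((insert c (insert d T)).orderEmbOfFin h2) :=
    Finset.orderEmbOfFin_unique h2 hg hgm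
  obtain ⟨p1, hp1, heq1⟩ := enum_insert (insert d T) h1 c hc h2
  obtain ⟨p2, hp2, heq2⟩ := enum_insert T hT d hd h1
  have hg2 : g = (cc c d (fun j => T.orderEmbOfFin hT j))
      ∘ ((Equiv.Perm.decomposeFin.symm (0, Fin.cycleRange p2)) * (Fin.cycleRange p1)) := by
    rw [hgenum, heq1, heq2]
    rw [cons_comp_perm c _ (Fin.cycleRange p2)]
    rfl
  have hsub : N.submatrix id g
      = (N.submatrix id (cc c d (fun j => T.orderEmbOfFin hT j))).submatrix id
        ((Equiv.Perm.decomposeFin.symm (0, Fin.cycleRange p2)) * (Fin.cycleRange p1)) := by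
    rw [hg2]; rfl
  rw [hsub, Matrix.det_permute']
  congr 1
  rw [_root_.map_mul, Equiv.Perm.decomposeFin.symm_sign, if_pos rfl, one_mul,
    Fin.sign_cycleRange, Fin.sign_cycleRange, hp1, hp2]
  push_cast
  ring

private lemma delTwo_eq {k : ℕ} (a b : Fin k) (h : ({a,b}ᶜ : Finset (Fin k)).card = k-2) :
    delTwo a b = fun r => (({a,b}ᶜ : Finset (Fin k)).orderEmbOfFin h r) := by
  rw [delTwo, dif_pos h]
  funext r
  rw [Finset.coe_orderIsoOfFin_apply]

private lemma sylv_master {k : ℕ} (hk : 4 ≤ k) (K : Matrix (Fin k) (Fin k) ℂ)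
    (ρ : Fin (k-2) → Fin k)
    (T : Finset (Fin k)) (hT : T.card = k - 4)
    (a b c d : Fin k) (hab : a ≠ b) (hcd : c < d)
    (hset : ({a,b} : Finset (Fin k))ᶜ = insert c (insert d T))
    (hc : c ∉ insert d T) (hd : d ∉ T) :
    (K.submatrix ρ (delTwo a b)).det
      = (-1 : ℂ) ^ ((T.filter (· < c)).card + (T.filter (· < d)).card)
        * ((Matrix.of fun (i : Fin (k-4+2)) (j : Fin k) =>
            K (ρ (Fin.cast (by omega) i)) j).submatrix id
            (cc c d (fun j => T.orderEmbOfFin hT j))).det := by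
  classical
  have hcast : k - 4 + 2 = k - 2 := by omega
  have hcard : ({a,b}ᶜ : Finset (Fin k)).card = k - 2 := by
    rw [Finset.card_compl, Finset.card_pair hab, Fintype.card_fin]
  have h2 : (insert c (insert d T)).card = (k - 4) + 2 := by
    rw [← hset, hcard]; omega
  rw [delTwo_eq a b hcard]
  rw [← Matrix.det_submatrix_equiv_self (finCongr hcast)
    (K.submatrix ρ fun r => (({a,b}ᶜ : Finset (Fin k)).orderEmbOfFin hcard) r)]
  have hmat : (K.submatrix ρ fun r => (({a,b}ᶜ : Finset (Fin k)).orderEmbOfFin hcard) r).submatrix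
        (finCongr hcast) (finCongr hcast)
      = (Matrix.of fun (i : Fin (k-4+2)) (j : Fin k) =>
          K (ρ (Fin.cast (by omega) i)) j).submatrix id
        (fun j => (({a,b}ᶜ : Finset (Fin k)).orderEmbOfFin hcard) (Fin.cast hcast j)) := rfl
  rw [hmat]
  have hfilter : ((insert d T).filter (· < c)).card = (T.filter (· < c)).card := by
    rw [Finset.filter_insert, if_neg (not_lt.2 hcd.le)]
  rw [← hfilter]
  refine det_compl_pair _ T hT c d hc hd h2 _ ?_ ?_
  · intro j
    rw [← hset]
    exact Finset.orderEmbOfFin_mem _ _ _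
  · intro j1 j2 h12
    exact (Finset.orderEmbOfFin _ hcard).strictMono (by rwa [Fin.lt_def] at h12 ⊢)

end SylvesterAux


/-- Sylvester-type identity for complementary minors: let `K` be a
`k×k` complex matrix, `k ≥ 4`, and for `a < b` let `E a b` be the determinant of
the matrix obtained from `K` by deleting the first two rows and columns `a, b`.
Then for `r < s` both beyond the first two columns,
`E_{1r}·E_{2s} − E_{1s}·E_{2r} = E_{12}·E_{rs}` (here with 0-based indices:
`E_{0r}E_{1s} − E_{0s}E_{1r} = E_{01}E_{rs}`). -/
theorem sylvester_minor_identity {k : ℕ} (hk : 4 ≤ k)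
    (K : Matrix (Fin k) (Fin k) ℂ) (r s : Fin k)
    (hr : 2 ≤ (r : ℕ)) (hrs : r < s) :
    (K.submatrix (delTwo (⟨0, by omega⟩ : Fin k) ⟨1, by omega⟩) (delTwo ⟨0, by omega⟩ r)).det *
      (K.submatrix (delTwo (⟨0, by omega⟩ : Fin k) ⟨1, by omega⟩) (delTwo ⟨1, by omega⟩ s)).det -
    (K.submatrix (delTwo (⟨0, by omega⟩ : Fin k) ⟨1, by omega⟩) (delTwo ⟨0, by omega⟩ s)).det *
      (K.submatrix (delTwo (⟨0, by omega⟩ : Fin k) ⟨1, by omega⟩) (delTwo ⟨1, by omega⟩ r)).det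
    = (K.submatrix (delTwo (⟨0, by omega⟩ : Fin k) ⟨1, by omega⟩)
        (delTwo (⟨0, by omega⟩ : Fin k) ⟨1, by omega⟩)).det *
      (K.submatrix (delTwo (⟨0, by omega⟩ : Fin k) ⟨1, by omega⟩) (delTwo r s)).det := by
  classical
  have hsv : (r : ℕ) < (s : ℕ) := hrs
  have hsk : (s : ℕ) < k := s.isLt
  set e0 : Fin k := ⟨0, by omega⟩ with he0
  set e1 : Fin k := ⟨1, by omega⟩ with he1
  have hv0 : (e0 : ℕ) = 0 := rfl
  have hv1 : (e1 : ℕ) = 1 := rfl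
  show (K.submatrix (delTwo e0 e1) (delTwo e0 r)).det *
      (K.submatrix (delTwo e0 e1) (delTwo e1 s)).det -
    (K.submatrix (delTwo e0 e1) (delTwo e0 s)).det *
      (K.submatrix (delTwo e0 e1) (delTwo e1 r)).det
    = (K.submatrix (delTwo e0 e1) (delTwo e0 e1)).det *
      (K.submatrix (delTwo e0 e1) (delTwo r s)).det
  set V : Finset (Fin k) := {e0, e1, r, s} with hV
  set T : Finset (Fin k) := Vᶜ with hTdef
  have hVcard : V.card = 4 := by
    rw [hV, Finset.card_insert_of_notMem, Finset.card_insert_of_notMem,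
      Finset.card_insert_of_notMem, Finset.card_singleton]
    · simp only [Finset.mem_singleton, Fin.ext_iff]; omega
    · simp only [Finset.mem_insert, Finset.mem_singleton, Fin.ext_iff, hv1]
      push_neg
      omega
    · simp only [Finset.mem_insert, Finset.mem_singleton, Fin.ext_iff, hv0, hv1]
      push_neg
      omega
  have hT : T.card = k - 4 := by
    rw [hTdef, Finset.card_compl, hVcard, Fintype.card_fin]
  -- set identities
  have hset1 : ({e0, e1} : Finset (Fin k))ᶜ = insert r (insert s T) := by
    ext y
    simp only [hTdef, hV, Finset.mem_compl, Finset.mem_insert, Finset.mem_singleton,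
      Fin.ext_iff, hv0, hv1, not_or]
    omega
  have hset2 : ({e0, r} : Finset (Fin k))ᶜ = insert e1 (insert s T) := by
    ext y
    simp only [hTdef, hV, Finset.mem_compl, Finset.mem_insert, Finset.mem_singleton,
      Fin.ext_iff, hv0, hv1, not_or]
    omega
  have hset3 : ({e0, s} : Finset (Fin k))ᶜ = insert e1 (insert r T) := by
    ext y
    simp only [hTdef, hV, Finset.mem_compl, Finset.mem_insert, Finset.mem_singleton,
      Fin.ext_iff, hv0, hv1, not_or]
    omega
  have hset4 : ({e1, r} : Finset (Fin k))ᶜ = insert e0 (insert s T) := by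
    ext y
    simp only [hTdef, hV, Finset.mem_compl, Finset.mem_insert, Finset.mem_singleton,
      Fin.ext_iff, hv0, hv1, not_or]
    omega
  have hset5 : ({e1, s} : Finset (Fin k))ᶜ = insert e0 (insert r T) := by
    ext y
    simp only [hTdef, hV, Finset.mem_compl, Finset.mem_insert, Finset.mem_singleton,
      Fin.ext_iff, hv0, hv1, not_or]
    omega
  have hset6 : ({r, s} : Finset (Fin k))ᶜ = insert e0 (insert e1 T) := by
    ext y
    simp only [hTdef, hV, Finset.mem_compl, Finset.mem_insert, Finset.mem_singleton,
      Fin.ext_iff, hv0, hv1, not_or]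
    omega
  -- non-membership facts
  have hnm : ∀ x y : Fin k, x ∈ V → x ≠ y → x ∉ insert y T := by
    intro x y hxV hxy h
    rcases Finset.mem_insert.1 h with h | h
    · exact hxy h
    · rw [hTdef, Finset.mem_compl] at h
      exact h hxV
  have hnT : ∀ x : Fin k, x ∈ V → x ∉ T := by
    intro x hxV h
    rw [hTdef, Finset.mem_compl] at h
    exact h hxV
  have me0 : e0 ∈ V := by simp [hV]
  have me1 : e1 ∈ V := by simp [hV]
  have mr : r ∈ V := by simp [hV]
  have ms : s ∈ V := by simp [hV]
  have ne01 : e0 ≠ e1 := Fin.ne_of_val_ne (by rw [hv0, hv1]; omega)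
  have ne0r : e0 ≠ r := Fin.ne_of_val_ne (by rw [hv0]; omega)
  have ne0s : e0 ≠ s := Fin.ne_of_val_ne (by rw [hv0]; omega)
  have ne1r : e1 ≠ r := Fin.ne_of_val_ne (by rw [hv1]; omega)
  have ne1s : e1 ≠ s := Fin.ne_of_val_ne (by rw [hv1]; omega)
  have ners : r ≠ s := Fin.ne_of_val_ne (by omega)
  have lt01 : e0 < e1 := by rw [Fin.lt_def, hv0, hv1]; omega
  have lt0r : e0 < r := by rw [Fin.lt_def, hv0]; omega
  have lt0s : e0 < s := by rw [Fin.lt_def, hv0]; omega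
  have lt1r : e1 < r := by rw [Fin.lt_def, hv1]; omega
  have lt1s : e1 < s := by rw [Fin.lt_def, hv1]; omega
  have ltrs : r < s := hrs
  have H1 := sylv_master hk K (delTwo e0 e1) T hT e0 e1 r s ne01 ltrs hset1
    (hnm r s mr ners) (hnT s ms)
  have H2 := sylv_master hk K (delTwo e0 e1) T hT e0 r e1 s ne0r lt1s hset2
    (hnm e1 s me1 ne1s) (hnT s ms)
  have H3 := sylv_master hk K (delTwo e0 e1) T hT e0 s e1 r ne0s lt1r hset3
    (hnm e1 r me1 ne1r) (hnT r mr)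
  have H4 := sylv_master hk K (delTwo e0 e1) T hT e1 r e0 s ne1r lt0s hset4
    (hnm e0 s me0 ne0s) (hnT s ms)
  have H5 := sylv_master hk K (delTwo e0 e1) T hT e1 s e0 r ne1s lt0r hset5
    (hnm e0 r me0 ne0r) (hnT r mr)
  have H6 := sylv_master hk K (delTwo e0 e1) T hT r s e0 e1 ners lt01 hset6
    (hnm e0 e1 me0 ne01) (hnT e1 me1)
  rw [H1, H2, H3, H4, H5, H6]
  have hgp := sylv_gp (Matrix.of fun (i : Fin (k-4+2)) (j : Fin k) =>
      K ((delTwo e0 e1) (Fin.cast (by omega) i)) j)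
    (fun j => T.orderEmbOfFin hT j) e0 e1 r s
  linear_combination (-((-1 : ℂ)
    ^ ((T.filter (· < e0)).card + (T.filter (· < e1)).card
      + (T.filter (· < r)).card + (T.filter (· < s)).card))) * hgp
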